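/- Let n ≥ 2. For every positive integer m and every pair of m-tuples (P₁, …, Pₘ) and (Q₁, …, Qₘ) of pairwise distinct points of the unit sphere Sⁿ ⊂ ℝⁿ⁺¹, there exists a birational diffeomorphism φ of Sⁿ such that φ(Pⱼ) = Qⱼ for every j = 1, …, m. In other words, for n > 1 the group of birational diffeomorphisms of Sⁿ acts infinitely transitively on Sⁿ. -/

import Mathlib

/-- The unit sphere `Sⁿ` in euclidean `ℝⁿ⁺¹`. -/
def unitSphere (n : ℕ) : Set (EuclideanSpace ℝ (Fin (n + 1))) := {x | ‖x‖ = 1}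

/-- `φ` is given on `Sⁿ` by polynomial fractions `Fᵢ/G` in the ambient coordinates,
where the denominator `G` vanishes at no point of `Sⁿ`. -/
def HasRegularRep (n : ℕ)
    (φ : EuclideanSpace ℝ (Fin (n + 1)) → EuclideanSpace ℝ (Fin (n + 1))) : Prop :=
  ∃ (F : Fin (n + 1) → MvPolynomial (Fin (n + 1)) ℝ) (G : MvPolynomial (Fin (n + 1)) ℝ),
    (∀ x ∈ unitSphere n, MvPolynomial.eval (fun i => x i) G ≠ 0) ∧
    ∀ x ∈ unitSphere n, ∀ i, φ x i =
      MvPolynomial.eval (fun i => x i) (F i) / MvPolynomial.eval (fun i => x i) G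

/-- A birational diffeomorphism of `Sⁿ`: a bijection of `Sⁿ` onto itself given on `Sⁿ` by
polynomial fractions with nonvanishing denominator, whose inverse bijection admits a
representation of the same form. -/
def IsBirationalDiffeo (n : ℕ)
    (φ : EuclideanSpace ℝ (Fin (n + 1)) → EuclideanSpace ℝ (Fin (n + 1))) : Prop :=
  Set.BijOn φ (unitSphere n) (unitSphere n) ∧ HasRegularRep n φ ∧
    ∃ ψ : EuclideanSpace ℝ (Fin (n + 1)) → EuclideanSpace ℝ (Fin (n + 1)),
      Set.InvOn ψ φ (unitSphere n) (unitSphere n) ∧ HasRegularRep n ψ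

noncomputable section
namespace Stmt5
open Finset MvPolynomial

variable {n : ℕ}

abbrev E (n : ℕ) := EuclideanSpace ℝ (Fin (n + 1))

/-- dot product of plain coordinate functions -/
def dot {n : ℕ} (x y : Fin (n+1) → ℝ) : ℝ := ∑ i, x i * y i

def Qf {n : ℕ} (x : Fin (n+1) → ℝ) : ℝ := dot x x

lemma dot_comm (x y : Fin (n+1) → ℝ) : dot x y = dot y x := by
  unfold dot; apply Finset.sum_congr rfl; intros; ring

lemma dot_congr_left {x x' y : Fin (n+1) → ℝ} (h : ∀ i, x i = x' i) :
    dot x y = dot x' y := by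
  unfold dot; apply Finset.sum_congr rfl; intro i _; rw [h i]

/-- expansion for `p + A e + B f` form -/
lemma dot_addmul (p e f y : Fin (n+1) → ℝ) (A B : ℝ) :
    dot (fun k => p k + A * e k + B * f k) y = dot p y + A * dot e y + B * dot f y := by
  unfold dot
  rw [Finset.mul_sum, Finset.mul_sum, ← Finset.sum_add_distrib, ← Finset.sum_add_distrib]
  apply Finset.sum_congr rfl; intro i _; ring

lemma sphere_iff_Q (x : E n) : x ∈ unitSphere n ↔ Qf (fun i => x i) = 1 := by
  have : ‖x‖ = Real.sqrt (Qf fun i => x i) := by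
    rw [EuclideanSpace.norm_eq]
    congr 1; apply Finset.sum_congr rfl; intro i _
    rw [Real.norm_eq_abs, sq_abs]; ring
  constructor
  · intro hx
    have h1 : Real.sqrt (Qf fun i => x i) = 1 := by rw [← this]; exact hx
    exact Real.sqrt_eq_one.mp h1
  · intro h; show ‖x‖ = 1; rw [this, h, Real.sqrt_one]



def ev {n : ℕ} (x : E n) (p : MvPolynomial (Fin (n+1)) ℝ) : ℝ :=
  MvPolynomial.eval (fun i => x i) p

/-- regular function on the sphere -/
def SR (n : ℕ) (h : E n → ℝ) : Prop :=
  ∃ p q : MvPolynomial (Fin (n+1)) ℝ,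
    (∀ x ∈ unitSphere n, ev x q ≠ 0) ∧ ∀ x ∈ unitSphere n, h x = ev x p / ev x q

lemma SR.congr {h h' : E n → ℝ} (hh : SR n h) (he : ∀ x ∈ unitSphere n, h x = h' x) :
    SR n h' := by
  obtain ⟨p, q, hq, hv⟩ := hh
  exact ⟨p, q, hq, fun x hx => (he x hx) ▸ hv x hx⟩

lemma SR.const (c : ℝ) : SR n (fun _ => c) := by
  refine ⟨C c, 1, fun x _ => ?_, fun x _ => ?_⟩ <;> simp [ev]

lemma SR.coord (i : Fin (n+1)) : SR n (fun x => x i) := by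
  refine ⟨X i, 1, fun x _ => ?_, fun x _ => ?_⟩ <;> simp [ev]

lemma SR.add {h₁ h₂ : E n → ℝ} (H₁ : SR n h₁) (H₂ : SR n h₂) :
    SR n (fun x => h₁ x + h₂ x) := by
  obtain ⟨p₁, q₁, hq₁, hv₁⟩ := H₁
  obtain ⟨p₂, q₂, hq₂, hv₂⟩ := H₂
  refine ⟨p₁ * q₂ + p₂ * q₁, q₁ * q₂, fun x hx => ?_, fun x hx => ?_⟩
  · simp only [ev, map_mul]; exact mul_ne_zero (hq₁ x hx) (hq₂ x hx)
  · have n1 := hq₁ x hx; have n2 := hq₂ x hx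
    simp only [ev, map_mul, map_add]
    rw [hv₁ x hx, hv₂ x hx]
    simp only [ev] at n1 n2 ⊢
    field_simp

lemma SR.mul {h₁ h₂ : E n → ℝ} (H₁ : SR n h₁) (H₂ : SR n h₂) :
    SR n (fun x => h₁ x * h₂ x) := by
  obtain ⟨p₁, q₁, hq₁, hv₁⟩ := H₁
  obtain ⟨p₂, q₂, hq₂, hv₂⟩ := H₂
  refine ⟨p₁ * p₂, q₁ * q₂, fun x hx => ?_, fun x hx => ?_⟩
  · simp only [ev, map_mul]; exact mul_ne_zero (hq₁ x hx) (hq₂ x hx)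
  · have n1 := hq₁ x hx; have n2 := hq₂ x hx
    simp only [ev, map_mul]
    rw [hv₁ x hx, hv₂ x hx]
    simp only [ev] at n1 n2 ⊢
    field_simp

lemma SR.neg {h : E n → ℝ} (H : SR n h) : SR n (fun x => - h x) := by
  have := SR.mul (SR.const (n := n) (-1)) H
  exact this.congr (fun x _ => by ring)

lemma SR.sub {h₁ h₂ : E n → ℝ} (H₁ : SR n h₁) (H₂ : SR n h₂) :
    SR n (fun x => h₁ x - h₂ x) := by
  have := H₁.add H₂.neg
  exact this.congr (fun x _ => by ring)

lemma SR.div {h₁ h₂ : E n → ℝ} (H₁ : SR n h₁) (H₂ : SR n h₂)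
    (hne : ∀ x ∈ unitSphere n, h₂ x ≠ 0) : SR n (fun x => h₁ x / h₂ x) := by
  obtain ⟨p₁, q₁, hq₁, hv₁⟩ := H₁
  obtain ⟨p₂, q₂, hq₂, hv₂⟩ := H₂
  have hp₂ : ∀ x ∈ unitSphere n, ev x p₂ ≠ 0 := by
    intro x hx hc
    apply hne x hx
    rw [hv₂ x hx, hc, zero_div]
  refine ⟨p₁ * q₂, q₁ * p₂, fun x hx => ?_, fun x hx => ?_⟩
  · simp only [ev, map_mul]; exact mul_ne_zero (hq₁ x hx) (hp₂ x hx)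
  · have n1 := hq₁ x hx; have n2 := hq₂ x hx; have n3 := hp₂ x hx
    simp only [ev, map_mul]
    rw [hv₁ x hx, hv₂ x hx]
    simp only [ev] at n1 n2 n3 ⊢
    field_simp

lemma SR.sum {ι : Type*} (s : Finset ι) (h : ι → E n → ℝ) (H : ∀ i ∈ s, SR n (h i)) :
    SR n (fun x => ∑ i ∈ s, h i x) := by
  classical
  induction s using Finset.induction_on with
  | empty => exact (SR.const 0).congr (fun x _ => by simp)
  | insert a s hni ih =>
      have := (H a (mem_insert_self a s)).add (ih fun i hi => H i (mem_insert_of_mem hi))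
      exact this.congr (fun x _ => by rw [Finset.sum_insert hni])

/-- evaluation of a polynomial at regular functions is regular -/
lemma SR.eval (p : MvPolynomial (Fin (n+1)) ℝ) (h : Fin (n+1) → E n → ℝ)
    (H : ∀ i, SR n (h i)) : SR n (fun x => MvPolynomial.eval (fun i => h i x) p) := by
  induction p using MvPolynomial.induction_on with
  | C c => exact (SR.const c).congr (fun x _ => by simp)
  | add p q hp hq => exact (hp.add hq).congr (fun x _ => by simp)
  | mul_X p i hp => exact (hp.mul (H i)).congr (fun x _ => by simp)

/-- common denominator: coordinatewise regular implies regular representation -/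
lemma hrr_of_SR (φ : E n → E n) (H : ∀ i, SR n (fun x => φ x i)) :
    HasRegularRep n φ := by
  choose p q hq hv using H
  refine ⟨fun i => p i * ∏ j ∈ univ.erase i, q j, ∏ j, q j, fun x hx => ?_, fun x hx i => ?_⟩
  · rw [map_prod]
    exact Finset.prod_ne_zero_iff.mpr fun j _ => hq j x hx
  · have h1 : φ x i = ev x (p i) / ev x (q i) := hv i x hx
    have h2 : (MvPolynomial.eval (fun i => x i)) (∏ j, q j)
        = ev x (q i) * ∏ j ∈ univ.erase i, ev x (q j) := by
      rw [map_prod, ← Finset.mul_prod_erase univ _ (mem_univ i)]; rfl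
    have h3 : (MvPolynomial.eval (fun i => x i)) (p i * ∏ j ∈ univ.erase i, q j)
        = ev x (p i) * ∏ j ∈ univ.erase i, ev x (q j) := by
      rw [map_mul, map_prod]; rfl
    rw [h2, h3, h1]
    have hA : (∏ j ∈ univ.erase i, ev x (q j)) ≠ 0 :=
      Finset.prod_ne_zero_iff.mpr fun j _ => hq j x hx
    rw [mul_comm (ev x (p i)) _, mul_comm (ev x (q i)) _, mul_div_mul_left _ _ hA]

lemma SR_of_hrr {φ : E n → E n} (H : HasRegularRep n φ) (i : Fin (n+1)) :
    SR n (fun x => φ x i) := by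
  obtain ⟨F, G, hG, hv⟩ := H
  exact ⟨F i, G, hG, fun x hx => hv x hx i⟩

/-- composition of regular representations -/
lemma hrr_comp {φ ψ : E n → E n} (Hφ : HasRegularRep n φ) (Hψ : HasRegularRep n ψ)
    (hmaps : ∀ x ∈ unitSphere n, ψ x ∈ unitSphere n) : HasRegularRep n (fun x => φ (ψ x)) := by
  obtain ⟨F, G, hG, hv⟩ := Hφ
  apply hrr_of_SR
  intro i
  have hnum : SR n (fun x => MvPolynomial.eval (fun j => ψ x j) (F i)) :=
    SR.eval (F i) _ (fun j => SR_of_hrr Hψ j)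
  have hden : SR n (fun x => MvPolynomial.eval (fun j => ψ x j) G) :=
    SR.eval G _ (fun j => SR_of_hrr Hψ j)
  have hdne : ∀ x ∈ unitSphere n, MvPolynomial.eval (fun j => ψ x j) G ≠ 0 :=
    fun x hx => hG (ψ x) (hmaps x hx)
  exact (hnum.div hden hdne).congr (fun x hx => (hv (ψ x) (hmaps x hx) i).symm)

/-- A globally invertible, norm-preserving map with regular representations both ways. -/
def Nice (n : ℕ) (φ : E n → E n) : Prop :=
  ∃ ψ : E n → E n, (∀ x, ψ (φ x) = x) ∧ (∀ x, φ (ψ x) = x) ∧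
    (∀ x, ‖φ x‖ = ‖x‖) ∧ HasRegularRep n φ ∧ HasRegularRep n ψ

lemma hrr_id : HasRegularRep n (fun x : E n => x) := by
  refine ⟨fun i => MvPolynomial.X i, 1, fun x _ => ?_, fun x _ i => ?_⟩ <;> simp

lemma Nice.id : Nice n (fun x : E n => x) :=
  ⟨fun x => x, fun _ => rfl, fun _ => rfl, fun _ => rfl, hrr_id, hrr_id⟩

lemma Nice.mapsTo {φ : E n → E n} (H : Nice n φ) :
    ∀ x ∈ unitSphere n, φ x ∈ unitSphere n := by
  obtain ⟨ψ, _, _, hnorm, _, _⟩ := H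
  intro x hx
  show ‖φ x‖ = 1
  rw [hnorm x]; exact hx

lemma Nice.comp {φ₁ φ₂ : E n → E n} (H₂ : Nice n φ₂) (H₁ : Nice n φ₁) :
    Nice n (fun x => φ₂ (φ₁ x)) := by
  obtain ⟨ψ₁, hl₁, hr₁, hn₁, hφ₁, hψ₁⟩ := H₁
  obtain ⟨ψ₂, hl₂, hr₂, hn₂, hφ₂, hψ₂⟩ := H₂
  have hψ₂norm : ∀ x, ‖ψ₂ x‖ = ‖x‖ := by
    intro x; conv_rhs => rw [← hr₂ x]
    rw [hn₂]
  refine ⟨fun x => ψ₁ (ψ₂ x), fun x => by simp [hl₂, hl₁], fun x => by simp [hr₁, hr₂],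
    fun x => by rw [hn₂, hn₁], ?_, ?_⟩
  · exact hrr_comp hφ₂ hφ₁ (fun x hx => by show ‖φ₁ x‖ = 1; rw [hn₁]; exact hx)
  · exact hrr_comp hψ₁ hψ₂ (fun x hx => by show ‖ψ₂ x‖ = 1; rw [hψ₂norm]; exact hx)

lemma Nice.isBirationalDiffeo {φ : E n → E n} (H : Nice n φ) : IsBirationalDiffeo n φ := by
  obtain ⟨ψ, hl, hr, hnorm, hφ, hψ⟩ := H
  have hmaps : ∀ x ∈ unitSphere n, φ x ∈ unitSphere n := fun x hx => by
    show ‖φ x‖ = 1; rw [hnorm x]; exact hx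
  have hψmaps : ∀ x ∈ unitSphere n, ψ x ∈ unitSphere n := fun x hx => by
    have : ‖φ (ψ x)‖ = ‖ψ x‖ := hnorm _
    rw [hr x] at this
    show ‖ψ x‖ = 1; rw [← this]; exact hx
  refine ⟨⟨hmaps, fun x _ y _ hxy => ?_, fun y hy => ⟨ψ y, hψmaps y hy, hr y⟩⟩,
    hφ, ψ, ⟨fun x _ => hl x, fun x _ => hr x⟩, hψ⟩
  have := congrArg ψ hxy
  rwa [hl, hl] at this

lemma Nice.injOn {φ : E n → E n} (H : Nice n φ) {x y : E n} (hxy : φ x = φ y) : x = y := by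
  obtain ⟨ψ, hl, _, _, _, _⟩ := H
  have := congrArg ψ hxy
  rwa [hl, hl] at this

/-! ### Twisting maps -/

def rotc (t : ℝ) : ℝ := (1 - t^2) / (1 + t^2)
def rots (t : ℝ) : ℝ := 2 * t / (1 + t^2)

lemma one_add_sq_ne (t : ℝ) : (1 : ℝ) + t^2 ≠ 0 := by positivity

lemma rotc_zero : rotc 0 = 1 := by norm_num [rotc]
lemma rots_zero : rots 0 = 0 := by norm_num [rots]

lemma rotcs_sq (t : ℝ) : rotc t ^ 2 + rots t ^ 2 = 1 := by
  unfold rotc rots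
  field_simp
  ring

section Twist

variable {n : ℕ}

def pye (e f x : Fin (n+1) → ℝ) : Fin (n+1) → ℝ :=
  fun k => x k - dot x e * e k - dot x f * f k

def twF (e f : Fin (n+1) → ℝ) (g : MvPolynomial (Fin (n+1)) ℝ) (x : Fin (n+1) → ℝ) : ℝ :=
  MvPolynomial.eval (pye e f x) g

def twC (e f : Fin (n+1) → ℝ) (g : MvPolynomial (Fin (n+1)) ℝ) (x : Fin (n+1) → ℝ) : ℝ :=
  rotc (twF e f g x)
def twS (e f : Fin (n+1) → ℝ) (g : MvPolynomial (Fin (n+1)) ℝ) (x : Fin (n+1) → ℝ) : ℝ :=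
  rots (twF e f g x)

def twA (e f : Fin (n+1) → ℝ) (g : MvPolynomial (Fin (n+1)) ℝ) (x : Fin (n+1) → ℝ) : ℝ :=
  twC e f g x * dot x e - twS e f g x * dot x f
def twB (e f : Fin (n+1) → ℝ) (g : MvPolynomial (Fin (n+1)) ℝ) (x : Fin (n+1) → ℝ) : ℝ :=
  twS e f g x * dot x e + twC e f g x * dot x f

def twfun (e f : Fin (n+1) → ℝ) (g : MvPolynomial (Fin (n+1)) ℝ) (x : Fin (n+1) → ℝ) :
    Fin (n+1) → ℝ :=
  fun k => pye e f x k + twA e f g x * e k + twB e f g x * f k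

def twist (e f : Fin (n+1) → ℝ) (g : MvPolynomial (Fin (n+1)) ℝ) : E n → E n :=
  fun x => WithLp.toLp 2 (twfun e f g (fun i => x i))

lemma twCS_sq (e f : Fin (n+1) → ℝ) (g : MvPolynomial (Fin (n+1)) ℝ) (x : Fin (n+1) → ℝ) :
    twC e f g x ^ 2 + twS e f g x ^ 2 = 1 := rotcs_sq _

variable {e f : Fin (n+1) → ℝ}

lemma dot_pye (x y : Fin (n+1) → ℝ) :
    dot (pye e f x) y = dot x y - dot x e * dot e y - dot x f * dot f y := by
  have h1 : ∀ i, pye e f x i = x i + (-(dot x e)) * e i + (-(dot x f)) * f i := by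
    intro i; unfold pye; ring
  rw [dot_congr_left h1, dot_addmul]
  ring

lemma dot_pye_e (hee : dot e e = 1) (hef : dot e f = 0) (x : Fin (n+1) → ℝ) :
    dot (pye e f x) e = 0 := by
  rw [dot_pye, hee, dot_comm f e, hef]; ring

lemma dot_pye_f (hff : dot f f = 1) (hef : dot e f = 0) (x : Fin (n+1) → ℝ) :
    dot (pye e f x) f = 0 := by
  rw [dot_pye, hff, hef]; ring

lemma dot_tw (g : MvPolynomial (Fin (n+1)) ℝ) (x y : Fin (n+1) → ℝ) :
    dot (twfun e f g x) y = dot (pye e f x) y + twA e f g x * dot e y + twB e f g x * dot f y :=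
  dot_addmul _ _ _ _ _ _

lemma dot_tw_e (hee : dot e e = 1) (hef : dot e f = 0)
    (g : MvPolynomial (Fin (n+1)) ℝ) (x : Fin (n+1) → ℝ) :
    dot (twfun e f g x) e = twA e f g x := by
  rw [dot_tw, dot_pye_e hee hef, hee, dot_comm f e, hef]; ring

lemma dot_tw_f (hff : dot f f = 1) (hef : dot e f = 0)
    (g : MvPolynomial (Fin (n+1)) ℝ) (x : Fin (n+1) → ℝ) :
    dot (twfun e f g x) f = twB e f g x := by
  rw [dot_tw, dot_pye_f hff hef, hff, hef]; ring

lemma Q_pye (hee : dot e e = 1) (hff : dot f f = 1) (hef : dot e f = 0)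
    (x : Fin (n+1) → ℝ) :
    Qf (pye e f x) = Qf x - dot x e ^ 2 - dot x f ^ 2 := by
  show dot (pye e f x) (pye e f x) = dot x x - dot x e ^ 2 - dot x f ^ 2
  rw [dot_pye, dot_comm e (pye e f x), dot_comm f (pye e f x),
    dot_pye_e hee hef, dot_pye_f hff hef, dot_comm x (pye e f x), dot_pye,
    dot_comm e x, dot_comm f x]
  ring

lemma Q_twfun (hee : dot e e = 1) (hff : dot f f = 1) (hef : dot e f = 0)
    (g : MvPolynomial (Fin (n+1)) ℝ) (x : Fin (n+1) → ℝ) :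
    Qf (twfun e f g x) = Qf x := by
  have h1 : Qf (twfun e f g x) = Qf (pye e f x) + twA e f g x ^ 2 + twB e f g x ^ 2 := by
    show dot _ _ = dot (pye e f x) (pye e f x) + _ + _
    rw [dot_tw, dot_comm e (twfun e f g x), dot_comm f (twfun e f g x),
      dot_tw_e hee hef, dot_tw_f hff hef,
      dot_comm (pye e f x) (twfun e f g x), dot_tw,
      dot_comm e (pye e f x), dot_comm f (pye e f x),
      dot_pye_e hee hef, dot_pye_f hff hef]
    ring
  have h2 : twA e f g x ^ 2 + twB e f g x ^ 2 = dot x e ^ 2 + dot x f ^ 2 := by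
    have hcs := twCS_sq e f g x
    unfold twA twB
    nlinarith [hcs]
  rw [h1, Q_pye hee hff hef]
  linarith [h2]

lemma pye_tw (hee : dot e e = 1) (hff : dot f f = 1) (hef : dot e f = 0)
    (g : MvPolynomial (Fin (n+1)) ℝ) (x : Fin (n+1) → ℝ) :
    pye e f (twfun e f g x) = pye e f x := by
  funext k
  show twfun e f g x k - dot (twfun e f g x) e * e k - dot (twfun e f g x) f * f k = _
  rw [dot_tw_e hee hef, dot_tw_f hff hef]
  show pye e f x k + twA e f g x * e k + twB e f g x * f k - _ - _ = _
  ring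

lemma twF_tw (hee : dot e e = 1) (hff : dot f f = 1) (hef : dot e f = 0)
    (g : MvPolynomial (Fin (n+1)) ℝ) (x : Fin (n+1) → ℝ) :
    twF e f g (twfun e f g x) = twF e f g x := by
  unfold twF
  rw [pye_tw hee hff hef]

lemma x_decomp (x : Fin (n+1) → ℝ) (k : Fin (n+1)) :
    x k = pye e f x k + dot x e * e k + dot x f * f k := by
  unfold pye; ring

lemma twfun_inv (hee : dot e e = 1) (hff : dot f f = 1) (hef : dot e f = 0)
    (g : MvPolynomial (Fin (n+1)) ℝ) (x : Fin (n+1) → ℝ) :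
    twfun e f (-g) (twfun e f g x) = x := by
  funext k
  have hF : twF e f (-g) (twfun e f g x) = - twF e f g x := by
    unfold twF
    rw [pye_tw hee hff hef, map_neg]
  have hC : twC e f (-g) (twfun e f g x) = twC e f g x := by
    unfold twC rotc; rw [hF]; ring_nf
  have hS : twS e f (-g) (twfun e f g x) = - twS e f g x := by
    unfold twS rots; rw [hF]; ring_nf
  have hcs := twCS_sq e f g x
  have hxk := x_decomp (e := e) (f := f) x k
  show pye e f (twfun e f g x) k + twA e f (-g) (twfun e f g x) * e k
      + twB e f (-g) (twfun e f g x) * f k = x k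
  unfold twA twB
  rw [hC, hS, pye_tw hee hff hef, dot_tw_e hee hef, dot_tw_f hff hef]
  unfold twA twB
  linear_combination (dot x e * e k + dot x f * f k) * hcs - hxk

lemma twfun_fix (hee : dot e e = 1) (hff : dot f f = 1) (hef : dot e f = 0)
    (g : MvPolynomial (Fin (n+1)) ℝ) (x : Fin (n+1) → ℝ) (hFx : twF e f g x = 0) :
    twfun e f g x = x := by
  funext k
  have hC : twC e f g x = 1 := by unfold twC; rw [hFx, rotc_zero]
  have hS : twS e f g x = 0 := by unfold twS; rw [hFx, rots_zero]
  show pye e f x k + twA e f g x * e k + twB e f g x * f k = x k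
  unfold twA twB
  rw [hC, hS]
  conv_rhs => rw [x_decomp (e := e) (f := f) x k]
  ring

end Twist
/-! ### Twists are nice -/

lemma norm_eq_sqrt_Q (x : E n) : ‖x‖ = Real.sqrt (Qf (fun i => x i)) := by
  rw [EuclideanSpace.norm_eq]
  congr 1; apply Finset.sum_congr rfl; intro i _
  rw [Real.norm_eq_abs, sq_abs]; ring

lemma sr_dot (e : Fin (n+1) → ℝ) : SR n (fun x => dot (fun i => x i) e) := by
  have : SR n (fun x => ∑ i, x i * e i) := by
    apply SR.sum
    intro i _
    exact (SR.coord i).mul (SR.const (e i))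
  exact this.congr (fun x _ => rfl)

lemma sr_pye (e f : Fin (n+1) → ℝ) (k : Fin (n+1)) :
    SR n (fun x => pye e f (fun i => x i) k) := by
  have h1 : SR n (fun x => x k - dot (fun i => x i) e * e k - dot (fun i => x i) f * f k) :=
    ((SR.coord k).sub ((sr_dot e).mul (SR.const (e k)))).sub ((sr_dot f).mul (SR.const (f k)))
  exact h1.congr (fun x _ => rfl)

lemma sr_twF (e f : Fin (n+1) → ℝ) (g : MvPolynomial (Fin (n+1)) ℝ) :
    SR n (fun x => twF e f g (fun i => x i)) := by
  have := SR.eval (n := n) g (fun i x => pye e f (fun j => x j) i) (sr_pye e f)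
  exact this.congr (fun x _ => rfl)

lemma twD_pos (e f : Fin (n+1) → ℝ) (g : MvPolynomial (Fin (n+1)) ℝ) (x : Fin (n+1) → ℝ) :
    (0:ℝ) < 1 + twF e f g x ^ 2 := by positivity

lemma sr_twC (e f : Fin (n+1) → ℝ) (g : MvPolynomial (Fin (n+1)) ℝ) :
    SR n (fun x => twC e f g (fun i => x i)) := by
  have hF := sr_twF (n := n) e f g
  have h1 : SR n (fun x => (1 - twF e f g (fun i => x i) ^ 2) /
      (1 + twF e f g (fun i => x i) ^ 2)) := by
    apply SR.div
    · exact (SR.const 1).sub ((hF.mul hF).congr (fun x _ => by ring))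
    · exact (SR.const 1).add ((hF.mul hF).congr (fun x _ => by ring))
    · intro x _; exact ne_of_gt (twD_pos e f g _)
  exact h1.congr (fun x _ => rfl)

lemma sr_twS (e f : Fin (n+1) → ℝ) (g : MvPolynomial (Fin (n+1)) ℝ) :
    SR n (fun x => twS e f g (fun i => x i)) := by
  have hF := sr_twF (n := n) e f g
  have h1 : SR n (fun x => (2 * twF e f g (fun i => x i)) /
      (1 + twF e f g (fun i => x i) ^ 2)) := by
    apply SR.div
    · exact (SR.const 2).mul hF
    · exact (SR.const 1).add ((hF.mul hF).congr (fun x _ => by ring))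
    · intro x _; exact ne_of_gt (twD_pos e f g _)
  exact h1.congr (fun x _ => rfl)

lemma hrr_twist (e f : Fin (n+1) → ℝ) (g : MvPolynomial (Fin (n+1)) ℝ) :
    HasRegularRep n (twist e f g) := by
  apply hrr_of_SR
  intro k
  have hC := sr_twC (n := n) e f g
  have hS := sr_twS (n := n) e f g
  have he := sr_dot (n := n) e
  have hf := sr_dot (n := n) f
  have hA : SR n (fun x => twA e f g (fun i => x i)) :=
    ((hC.mul he).sub (hS.mul hf)).congr (fun x _ => rfl)
  have hB : SR n (fun x => twB e f g (fun i => x i)) :=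
    ((hS.mul he).add (hC.mul hf)).congr (fun x _ => rfl)
  have h1 : SR n (fun x => pye e f (fun i => x i) k + twA e f g (fun i => x i) * e k
      + twB e f g (fun i => x i) * f k) :=
    ((sr_pye e f k).add (hA.mul (SR.const (e k)))).add (hB.mul (SR.const (f k)))
  exact h1.congr (fun x _ => rfl)

lemma norm_twist (hee : dot e e = 1) (hff : dot f f = 1) (hef : dot e f = 0)
    (g : MvPolynomial (Fin (n+1)) ℝ) (x : E n) : ‖twist e f g x‖ = ‖x‖ := by
  rw [norm_eq_sqrt_Q, norm_eq_sqrt_Q]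
  congr 1
  have : Qf (fun i => twist e f g x i) = Qf (twfun e f g (fun i => x i)) := rfl
  rw [this, Q_twfun hee hff hef]

lemma twist_inv_left (hee : dot e e = 1) (hff : dot f f = 1) (hef : dot e f = 0)
    (g : MvPolynomial (Fin (n+1)) ℝ) (x : E n) :
    twist e f (-g) (twist e f g x) = x := by
  show WithLp.toLp 2 (twfun e f (-g) (fun i => twfun e f g (fun j => x j) i)) = x
  have h1 : (fun i => twfun e f g (fun j => x j) i) = twfun e f g (fun j => x j) := rfl
  rw [h1, twfun_inv hee hff hef]

lemma nice_twist (hee : dot e e = 1) (hff : dot f f = 1) (hef : dot e f = 0)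
    (g : MvPolynomial (Fin (n+1)) ℝ) : Nice n (twist e f g) := by
  refine ⟨twist e f (-g), twist_inv_left hee hff hef g, fun x => ?_,
    norm_twist hee hff hef g, hrr_twist e f g, hrr_twist e f (-g)⟩
  have := twist_inv_left hee hff hef (-g) x
  rwa [neg_neg] at this

/-- points with vanishing twisting function are fixed -/
lemma twist_fix (hee : dot e e = 1) (hff : dot f f = 1) (hef : dot e f = 0)
    (g : MvPolynomial (Fin (n+1)) ℝ) (x : E n) (hz : twF e f g (fun i => x i) = 0) :
    twist e f g x = x := by
  show WithLp.toLp 2 (twfun e f g (fun i => x i)) = x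
  rw [twfun_fix hee hff hef _ _ hz]

/-! ### Interpolation -/

lemma exists_ne_coord {k : ℕ} (z w : Fin (k+1) → ℝ) (h : z ≠ w) : ∃ i, z i ≠ w i := by
  by_contra hc
  push_neg at hc
  exact h (funext hc)

lemma interp {n : ℕ} (k : ℕ) (z : Fin k → (Fin (n+1) → ℝ)) (w : Fin (n+1) → ℝ) (t : ℝ)
    (hz : ∀ j, z j ≠ w) :
    ∃ g : MvPolynomial (Fin (n+1)) ℝ,
      MvPolynomial.eval w g = t ∧ ∀ j, MvPolynomial.eval (z j) g = 0 := by
  classical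
  have hdpos : ∀ j, 0 < ∑ i, (w i - z j i) * (w i - z j i) := by
    intro j
    obtain ⟨i, hi⟩ := exists_ne_coord (z j) w (hz j)
    have hne : w i - z j i ≠ 0 := sub_ne_zero.mpr (fun hc => hi hc.symm)
    exact Finset.sum_pos' (fun i _ => mul_self_nonneg _)
      ⟨i, Finset.mem_univ i, mul_self_pos.mpr hne⟩
  set L : Fin k → MvPolynomial (Fin (n+1)) ℝ := fun j =>
    MvPolynomial.C (∑ i, (w i - z j i) * (w i - z j i))⁻¹ * ∑ i, MvPolynomial.C (w i - z j i) *
      (MvPolynomial.X i - MvPolynomial.C (z j i)) with hL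
  have hLw : ∀ j, MvPolynomial.eval w (L j) = 1 := by
    intro j
    simp only [hL, map_mul, MvPolynomial.eval_C, map_sum, map_sub, MvPolynomial.eval_X]
    rw [inv_mul_eq_one₀ (hdpos j).ne']
  have hLz : ∀ j, MvPolynomial.eval (z j) (L j) = 0 := by
    intro j
    simp only [hL, map_mul, MvPolynomial.eval_C, map_sum, map_sub, MvPolynomial.eval_X]
    simp
  refine ⟨MvPolynomial.C t * ∏ j, L j, ?_, fun j => ?_⟩
  · rw [map_mul, MvPolynomial.eval_C, map_prod]
    rw [Finset.prod_congr rfl (fun j _ => hLw j)]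
    simp
  · rw [map_mul, map_prod]
    rw [Finset.prod_eq_zero (Finset.mem_univ j) (hLz j)]
    ring

/-! ### Rotations of the plane with rational parameter -/

lemma rot_param (c s : ℝ) (hcs : c^2 + s^2 = 1) (h1c : 1 + c ≠ 0) :
    rotc (s/(1+c)) = c ∧ rots (s/(1+c)) = s := by
  have h1 : 1 + (s/(1+c))^2 = 2/(1+c) := by
    field_simp
    linear_combination hcs
  constructor
  · unfold rotc
    rw [h1]
    field_simp
    linear_combination (-1:ℝ) * hcs
  · unfold rots
    rw [h1]
    field_simp

lemma rot1 (a b a' b' : ℝ) (h : a*a + b*b = a'*a' + b'*b') (hnz : a*a + b*b ≠ 0)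
    (hne : ¬(a' = -a ∧ b' = -b)) :
    ∃ t, rotc t * a - rots t * b = a' ∧ rots t * a + rotc t * b = b' := by
  have hcs : ((a*a'+b*b')/(a*a+b*b))^2 + ((a*b'-b*a')/(a*a+b*b))^2 = 1 := by
    rw [div_pow, div_pow, ← add_div, div_eq_one_iff_eq (pow_ne_zero 2 hnz)]
    linear_combination (-(a*a+b*b)) * h
  have h1c : 1 + (a*a'+b*b')/(a*a+b*b) ≠ 0 := by
    intro h0
    have hcm1 : (a*a'+b*b')/(a*a+b*b) = -1 := by linarith
    have e1 : a*a' + b*b' = -(a*a+b*b) := by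
      rw [div_eq_iff hnz] at hcm1
      linarith [hcm1]
    have hsq : ((a*b'-b*a')/(a*a+b*b))^2 = 0 := by
      rw [hcm1] at hcs
      nlinarith [hcs]
    have hs0 : (a*b'-b*a')/(a*a+b*b) = 0 := by
      exact pow_eq_zero_iff two_ne_zero |>.mp hsq
    have e2 : a*b' - b*a' = 0 := by
      rcases div_eq_zero_iff.mp hs0 with h' | h'
      · exact h'
      · exact absurd h' hnz
    have ea : (a' + a) * (a*a+b*b) = 0 := by linear_combination a*e1 - b*e2
    have eb : (b' + b) * (a*a+b*b) = 0 := by linear_combination b*e1 + a*e2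
    have ha' : a' = -a := by
      rcases mul_eq_zero.mp ea with h' | h'
      · linarith
      · exact absurd h' hnz
    have hb' : b' = -b := by
      rcases mul_eq_zero.mp eb with h' | h'
      · linarith
      · exact absurd h' hnz
    exact hne ⟨ha', hb'⟩
  obtain ⟨hrc, hrs⟩ := rot_param _ _ hcs h1c
  refine ⟨(a*b'-b*a')/(a*a+b*b) / (1 + (a*a'+b*b')/(a*a+b*b)), ?_, ?_⟩
  · rw [hrc, hrs]
    field_simp
    rw [div_eq_iff (by rw [sq, sq]; exact hnz)]
    ring
  · rw [hrc, hrs]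
    field_simp
    rw [div_eq_iff (by rw [sq, sq]; exact hnz)]
    ring

/-- two rational rotations reach every point of the circle -/
lemma rot2 (a b a' b' : ℝ) (h : a*a + b*b = a'*a' + b'*b') (hnz : a*a + b*b ≠ 0) :
    ∃ t₁ t₂, rotc t₂ * (rotc t₁ * a - rots t₁ * b) - rots t₂ * (rots t₁ * a + rotc t₁ * b) = a'
      ∧ rots t₂ * (rotc t₁ * a - rots t₁ * b) + rotc t₂ * (rots t₁ * a + rotc t₁ * b) = b' := by
  by_cases hne : a' = -a ∧ b' = -b
  · -- rotation by π, go through a midpoint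
    obtain ⟨ha', hb'⟩ := hne
    by_cases hab : a = -b
    · -- midpoint (b, -a)
      have hm : b*b + (-a)*(-a) = a*a + b*b := by ring
      obtain ⟨t₁, h₁, h₁'⟩ := rot1 a b b (-a) (by ring_nf) hnz
        (by rintro ⟨h1, h2⟩; apply hnz; nlinarith)
      obtain ⟨t₂, h₂, h₂'⟩ := rot1 b (-a) a' b' (by rw [ha', hb']; ring) (by rwa [hm])
        (by rintro ⟨h1, h2⟩; rw [ha'] at h1; rw [hb'] at h2; apply hnz; nlinarith)
      exact ⟨t₁, t₂, by rw [h₁, h₁']; exact h₂, by rw [h₁, h₁']; exact h₂'⟩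
    · -- midpoint (-b, a)
      have hm : (-b)*(-b) + a*a = a*a + b*b := by ring
      obtain ⟨t₁, h₁, h₁'⟩ := rot1 a b (-b) a (by ring_nf) hnz
        (by rintro ⟨h1, h2⟩; apply hnz; nlinarith)
      obtain ⟨t₂, h₂, h₂'⟩ := rot1 (-b) a a' b' (by rw [ha', hb']; ring) (by rwa [hm])
        (by rintro ⟨h1, h2⟩; rw [ha'] at h1; exact hab (by linarith))
      exact ⟨t₁, t₂, by rw [h₁, h₁']; exact h₂, by rw [h₁, h₁']; exact h₂'⟩
  · obtain ⟨t₂, h₂, h₂'⟩ := rot1 a b a' b' h hnz hne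
    refine ⟨0, t₂, ?_, ?_⟩
    · rw [rotc_zero, rots_zero]
      rw [show (1:ℝ) * a - 0 * b = a by ring, show (0:ℝ) * a + 1 * b = b by ring]
      exact h₂
    · rw [rotc_zero, rots_zero]
      rw [show (1:ℝ) * a - 0 * b = a by ring, show (0:ℝ) * a + 1 * b = b by ring]
      exact h₂'

/-! ### Moving along a circle -/

lemma sq_sum_eq (A B A' B' P P' : ℝ) (hpq : P = P') (hda : P = 1 - A^2 - B^2)
    (hdb : P' = 1 - A'^2 - B'^2) : A*A + B*B = A'*A' + B'*B' := by
  linear_combination hda - hdb - hpq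

lemma zero_of_sq (A B : ℝ) (h : A*A + B*B = 0) : A = 0 ∧ B = 0 := by
  constructor <;> nlinarith [mul_self_nonneg A, mul_self_nonneg B]

lemma circle_move {n : ℕ} {e f : Fin (n+1) → ℝ}
    (hee : dot e e = 1) (hff : dot f f = 1) (hef : dot e f = 0)
    {k : ℕ} (R : Fin k → E n) (a b : E n)
    (ha : a ∈ unitSphere n) (hb : b ∈ unitSphere n)
    (hpab : pye e f (fun i => a i) = pye e f (fun i => b i))
    (hpR : ∀ j, pye e f (fun i => R j i) ≠ pye e f (fun i => a i)) :
    ∃ φ : E n → E n, Nice n φ ∧ (∀ j, φ (R j) = R j) ∧ φ a = b := by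
  by_cases hab : a = b
  · exact ⟨fun x => x, Nice.id, fun j => rfl, by rw [hab]⟩
  have hQa : Qf (fun i => a i) = 1 := (sphere_iff_Q a).mp ha
  have hQb : Qf (fun i => b i) = 1 := (sphere_iff_Q b).mp hb
  have hda : Qf (pye e f (fun i => a i)) =
      1 - dot (fun i => a i) e ^ 2 - dot (fun i => a i) f ^ 2 := by
    rw [Q_pye hee hff hef, hQa]
  have hdb : Qf (pye e f (fun i => b i)) =
      1 - dot (fun i => b i) e ^ 2 - dot (fun i => b i) f ^ 2 := by
    rw [Q_pye hee hff hef, hQb]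
  have hpq : Qf (pye e f (fun i => a i)) = Qf (pye e f (fun i => b i)) := by rw [hpab]
  have hQeq : dot (fun i => a i) e * dot (fun i => a i) e
      + dot (fun i => a i) f * dot (fun i => a i) f
      = dot (fun i => b i) e * dot (fun i => b i) e
      + dot (fun i => b i) f * dot (fun i => b i) f := by
    exact sq_sum_eq _ _ _ _ _ _ hpq hda hdb
  have hnz : dot (fun i => a i) e * dot (fun i => a i) e
      + dot (fun i => a i) f * dot (fun i => a i) f ≠ 0 := by
    intro h0
    obtain ⟨hα, hβ⟩ := zero_of_sq _ _ h0
    have h0' : dot (fun i => b i) e * dot (fun i => b i) e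
        + dot (fun i => b i) f * dot (fun i => b i) f = 0 := by rw [← hQeq]; exact h0
    obtain ⟨hα', hβ'⟩ := zero_of_sq _ _ h0'
    apply hab
    refine PiLp.ext (fun kk => ?_)
    have h1 := x_decomp (e := e) (f := f) (fun i => a i) kk
    have h2 := x_decomp (e := e) (f := f) (fun i => b i) kk
    rw [hα, hβ] at h1
    rw [hα', hβ'] at h2
    show a kk = b kk
    rw [h1, h2, hpab]
  obtain ⟨t₁, t₂, hr1, hr2⟩ := rot2 _ _ _ _ hQeq hnz
  obtain ⟨g₁, hg₁w, hg₁z⟩ := interp k (fun j => pye e f (fun i => R j i))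
    (pye e f (fun i => a i)) t₁ hpR
  obtain ⟨g₂, hg₂w, hg₂z⟩ := interp k (fun j => pye e f (fun i => R j i))
    (pye e f (fun i => a i)) t₂ hpR
  refine ⟨fun x => twist e f g₂ (twist e f g₁ x),
    (nice_twist hee hff hef g₂).comp (nice_twist hee hff hef g₁), fun j => ?_, ?_⟩
  · have f1 : twist e f g₁ (R j) = R j := twist_fix hee hff hef g₁ (R j) (hg₁z j)
    have f2 : twist e f g₂ (R j) = R j := twist_fix hee hff hef g₂ (R j) (hg₂z j)
    show twist e f g₂ (twist e f g₁ (R j)) = R j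
    rw [f1, f2]
  · -- the motion of a
    have hpy : pye e f (twfun e f g₁ (fun i => a i)) = pye e f (fun i => a i) :=
      pye_tw hee hff hef g₁ (fun i => a i)
    have hF1 : twF e f g₁ (fun i => a i) = t₁ := hg₁w
    have hF2 : twF e f g₂ (twfun e f g₁ (fun i => a i)) = t₂ := by
      unfold twF
      rw [hpy]
      exact hg₂w
    have hde : dot (twfun e f g₁ (fun i => a i)) e = twA e f g₁ (fun i => a i) :=
      dot_tw_e hee hef g₁ _
    have hdf : dot (twfun e f g₁ (fun i => a i)) f = twB e f g₁ (fun i => a i) :=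
      dot_tw_f hff hef g₁ _
    have hA1 : twA e f g₁ (fun i => a i)
        = rotc t₁ * dot (fun i => a i) e - rots t₁ * dot (fun i => a i) f := by
      unfold twA twC twS
      rw [hF1]
    have hB1 : twB e f g₁ (fun i => a i)
        = rots t₁ * dot (fun i => a i) e + rotc t₁ * dot (fun i => a i) f := by
      unfold twB twC twS
      rw [hF1]
    have hA2 : twA e f g₂ (twfun e f g₁ (fun i => a i)) = dot (fun i => b i) e := by
      unfold twA twC twS
      rw [hF2, hde, hdf, hA1, hB1]
      exact hr1
    have hB2 : twB e f g₂ (twfun e f g₁ (fun i => a i)) = dot (fun i => b i) f := by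
      unfold twB twC twS
      rw [hF2, hde, hdf, hA1, hB1]
      exact hr2
    refine PiLp.ext (fun kk => ?_)
    show pye e f (twfun e f g₁ (fun i => a i)) kk
        + twA e f g₂ (twfun e f g₁ (fun i => a i)) * e kk
        + twB e f g₂ (twfun e f g₁ (fun i => a i)) * f kk = b kk
    rw [hA2, hB2, hpy, hpab]
    exact (x_decomp (fun i => b i) kk).symm
/-! ### Choice of a good auxiliary vector -/

def std {n : ℕ} (i : Fin (n+1)) : Fin (n+1) → ℝ := fun k => if k = i then 1 else 0

lemma dot_std {n : ℕ} (i j : Fin (n+1)) :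
    dot (std i) (std j) = if i = j then 1 else 0 := by
  unfold dot std
  by_cases h : i = j
  · subst h
    simp [Finset.sum_ite_eq']
  · rw [if_neg h]
    apply Finset.sum_eq_zero
    intro k _
    by_cases hk : k = i
    · rw [if_pos hk, if_neg (by rw [hk]; exact h)]
      ring
    · rw [if_neg hk]
      ring

lemma exists_three {n : ℕ} (hn : 2 ≤ n) (i₀ : Fin (n+1)) :
    ∃ i₁ i₂ : Fin (n+1), i₁ ≠ i₀ ∧ i₂ ≠ i₀ ∧ i₁ ≠ i₂ := by
  have h1 : (Finset.univ.erase i₀).Nonempty := by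
    rw [← Finset.card_pos, Finset.card_erase_of_mem (Finset.mem_univ _), Finset.card_univ,
      Fintype.card_fin]
    omega
  obtain ⟨i₁, hi₁⟩ := h1
  have h2 : ((Finset.univ.erase i₀).erase i₁).Nonempty := by
    rw [← Finset.card_pos, Finset.card_erase_of_mem hi₁,
      Finset.card_erase_of_mem (Finset.mem_univ _), Finset.card_univ, Fintype.card_fin]
    omega
  obtain ⟨i₂, hi₂⟩ := h2
  refine ⟨i₁, i₂, Finset.ne_of_mem_erase hi₁, ?_, ?_⟩
  · exact Finset.ne_of_mem_erase (Finset.mem_of_mem_erase hi₂)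
  · exact (Finset.ne_of_mem_erase hi₂).symm

lemma exists_good_u {n : ℕ} (hn : 2 ≤ n) {k : ℕ} (w : Fin (n+1) → ℝ) (hw : w ≠ 0)
    (V : Fin k → (Fin (n+1) → ℝ)) :
    ∃ u : Fin (n+1) → ℝ,
      (¬ ∃ μ : ℝ, ∀ i, u i = μ * w i) ∧
      ∀ j, ¬ ∃ μ ν : ℝ, ∀ i, u i = μ * w i + ν * V j i := by
  classical
  obtain ⟨i₀, hi₀⟩ := exists_ne_coord w 0 hw
  have hwi₀ : w i₀ ≠ 0 := hi₀
  obtain ⟨i₁, i₂, h10, h20, h12⟩ := exists_three hn i₀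
  -- the one-parameter family u_s = std i₁ + s • std i₂
  set us : ℝ → (Fin (n+1) → ℝ) := fun s => fun i => std i₁ i + s * std i₂ i with hus
  -- each plane span{w, V j} contains u_s for at most one value of s
  have key : ∀ (v : Fin (n+1) → ℝ) (s s' : ℝ),
      (∃ μ ν : ℝ, ∀ i, us s i = μ * w i + ν * v i) →
      (∃ μ ν : ℝ, ∀ i, us s' i = μ * w i + ν * v i) → s = s' := by
    intro v s s' ⟨μ, ν, hs⟩ ⟨μ', ν', hs'⟩
    by_contra hss
    have hd : s - s' ≠ 0 := sub_ne_zero.mpr hss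
    -- E₂ = C w + D v
    set C := (μ - μ') / (s - s') with hC
    set D := (ν - ν') / (s - s') with hD
    have hE2 : ∀ i, std i₂ i = C * w i + D * v i := by
      intro i
      have h1 := hs i
      have h2 := hs' i
      rw [hC, hD]
      field_simp
      have : (s - s') * std i₂ i = (μ - μ') * w i + (ν - ν') * v i := by
        simp only [hus] at h1 h2
        linear_combination h1 - h2
      linear_combination this
    -- E₁ = A w + B v
    set A := μ - s * C with hA
    set B := ν - s * D with hB
    have hE1 : ∀ i, std i₁ i = A * w i + B * v i := by
      intro i
      have h1 := hs i
      have h2 := hE2 i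
      rw [hA, hB]
      simp only [hus] at h1
      linear_combination h1 - s * h2
    -- combination D·E₁ − B·E₂ is proportional to w
    have hcomb : ∀ i, D * std i₁ i - B * std i₂ i = (D * A - B * C) * w i := by
      intro i
      have h1 := hE1 i
      have h2 := hE2 i
      linear_combination D * h1 - B * h2
    have hstd10 : std i₁ i₀ = 0 := by unfold std; rw [if_neg (Ne.symm h10)]
    have hstd20 : std i₂ i₀ = 0 := by unfold std; rw [if_neg (Ne.symm h20)]
    have hstd11 : std i₁ i₁ = 1 := by unfold std; rw [if_pos rfl]
    have hstd21 : std i₂ i₁ = 0 := by unfold std; rw [if_neg h12]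
    have hstd12 : std i₁ i₂ = 0 := by unfold std; rw [if_neg (Ne.symm h12)]
    have hstd22 : std i₂ i₂ = 1 := by unfold std; rw [if_pos rfl]
    have hmu0 : D * A - B * C = 0 := by
      have := hcomb i₀
      rw [hstd10, hstd20] at this
      have h0 : (D * A - B * C) * w i₀ = 0 := by linarith
      rcases mul_eq_zero.mp h0 with h' | h'
      · exact h'
      · exact absurd h' hwi₀
    have hDzero : D = 0 := by
      have := hcomb i₁
      rw [hstd11, hstd21, hmu0] at this
      linarith
    have hBzero : B = 0 := by
      have := hcomb i₂
      rw [hstd12, hstd22, hmu0] at this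
      linarith
    -- then E₂ = C w, contradiction at i₂ and i₀
    have hCzero : C = 0 := by
      have := hE2 i₀
      rw [hstd20, hDzero] at this
      have h0 : C * w i₀ = 0 := by linarith
      rcases mul_eq_zero.mp h0 with h' | h'
      · exact h'
      · exact absurd h' hwi₀
    have := hE2 i₂
    rw [hstd22, hDzero, hCzero] at this
    norm_num at this
  -- the set of bad parameters is finite
  have hbad : (⋃ j : Fin k, {s : ℝ | ∃ μ ν : ℝ, ∀ i, us s i = μ * w i + ν * V j i} ∪
      {s : ℝ | ∃ μ : ℝ, ∀ i, us s i = μ * w i}).Finite := by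
    apply Set.finite_iUnion
    intro j
    apply Set.Finite.union
    · apply Set.Subsingleton.finite
      intro s hs s' hs'
      exact key (V j) s s' hs hs'
    · apply Set.Subsingleton.finite
      intro s hs s' hs'
      obtain ⟨μ, hμ⟩ := hs
      obtain ⟨μ', hμ'⟩ := hs'
      exact key w s s' ⟨μ, 0, fun i => by rw [hμ i]; ring⟩ ⟨μ', 0, fun i => by rw [hμ' i]; ring⟩
  by_cases hk : k = 0
  · -- no constraints from V, but still need the non-multiple condition
    subst hk
    have hbad2 : ({s : ℝ | ∃ μ : ℝ, ∀ i, us s i = μ * w i}).Finite := by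
      apply Set.Subsingleton.finite
      intro s hs s' hs'
      obtain ⟨μ, hμ⟩ := hs
      obtain ⟨μ', hμ'⟩ := hs'
      exact key w s s' ⟨μ, 0, fun i => by rw [hμ i]; ring⟩ ⟨μ', 0, fun i => by rw [hμ' i]; ring⟩
    obtain ⟨s, hsnot⟩ := hbad2.exists_notMem
    exact ⟨us s, fun hc => hsnot hc, fun j => absurd j.2 (by omega)⟩
  · obtain ⟨s, hsnot⟩ := hbad.exists_notMem
    refine ⟨us s, ?_, ?_⟩
    · intro hc
      obtain ⟨j⟩ : Nonempty (Fin k) := ⟨⟨0, Nat.pos_of_ne_zero hk⟩⟩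
      exact hsnot (Set.mem_iUnion.mpr ⟨j, Or.inr hc⟩)
    · intro j hc
      exact hsnot (Set.mem_iUnion.mpr ⟨j, Or.inl hc⟩)

/-! ### Construction of an adapted orthonormal 2-frame -/

lemma Qf_pos {n : ℕ} (w : Fin (n+1) → ℝ) (hw : w ≠ 0) : 0 < Qf w := by
  obtain ⟨i, hi⟩ := exists_ne_coord w 0 hw
  exact Finset.sum_pos' (fun i _ => mul_self_nonneg _)
    ⟨i, Finset.mem_univ i, mul_self_pos.mpr hi⟩

lemma dot_smul_left {n : ℕ} (c : ℝ) (x y : Fin (n+1) → ℝ) :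
    dot (fun i => c * x i) y = c * dot x y := by
  unfold dot
  rw [Finset.mul_sum]
  apply Finset.sum_congr rfl
  intros; ring

lemma dot_sub_left {n : ℕ} (x y z : Fin (n+1) → ℝ) :
    dot (fun i => x i - y i) z = dot x z - dot y z := by
  unfold dot
  rw [← Finset.sum_sub_distrib]
  apply Finset.sum_congr rfl
  intros; ring

lemma exists_plane {n : ℕ} (hn : 2 ≤ n) {k : ℕ} (w : Fin (n+1) → ℝ) (hw : w ≠ 0)
    (v : Fin k → (Fin (n+1) → ℝ)) (hv : ∀ j, ¬ ∃ μ : ℝ, ∀ i, v j i = μ * w i) :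
    ∃ e f : Fin (n+1) → ℝ, dot e e = 1 ∧ dot f f = 1 ∧ dot e f = 0 ∧
      (∀ i, pye e f w i = 0) ∧ (∀ j, ¬ ∀ i, pye e f (v j) i = 0) := by
  obtain ⟨u, hu1, hu2⟩ := exists_good_u hn w hw v
  have hQw := Qf_pos w hw
  set sw := Real.sqrt (Qf w) with hswdef
  have hsw : 0 < sw := Real.sqrt_pos.mpr hQw
  have hsw2 : sw * sw = Qf w := Real.mul_self_sqrt hQw.le
  set e : Fin (n+1) → ℝ := fun i => sw⁻¹ * w i with he
  have hwe : ∀ i, w i = sw * e i := by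
    intro i
    rw [he]
    field_simp
  have hdee : dot e e = 1 := by
    rw [he, dot_smul_left, dot_comm, dot_smul_left]
    show sw⁻¹ * (sw⁻¹ * Qf w) = 1
    rw [← hsw2]
    field_simp
  have hdwe : dot w e = sw := by
    rw [dot_comm, he, dot_smul_left]
    show sw⁻¹ * Qf w = sw
    rw [← hsw2]
    field_simp
  set u' : Fin (n+1) → ℝ := fun i => u i - dot u e * e i with hu'
  have hdu'e : dot u' e = 0 := by
    rw [hu', dot_sub_left, dot_smul_left, hdee]
    ring
  have hu'ne : u' ≠ 0 := by
    intro hc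
    apply hu1
    refine ⟨dot u e * sw⁻¹, fun i => ?_⟩
    have h0 : u i - dot u e * e i = 0 := congrFun hc i
    have h3 : u i = dot u e * e i := by linarith
    rw [h3, he]
    ring
  have hQu' := Qf_pos u' hu'ne
  set su := Real.sqrt (Qf u') with hsudef
  have hsu : 0 < su := Real.sqrt_pos.mpr hQu'
  have hsu2 : su * su = Qf u' := Real.mul_self_sqrt hQu'.le
  set f : Fin (n+1) → ℝ := fun i => su⁻¹ * u' i with hf
  have hdff : dot f f = 1 := by
    rw [hf, dot_smul_left, dot_comm, dot_smul_left]
    show su⁻¹ * (su⁻¹ * Qf u') = 1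
    rw [← hsu2]
    field_simp
  have hdef : dot e f = 0 := by
    rw [hf, dot_comm, dot_smul_left, hdu'e]
    ring
  have hdwf : dot w f = 0 := by
    have h1 : dot w f = sw * dot e f := by
      rw [dot_congr_left hwe, dot_smul_left]
    rw [h1, hdef]
    ring
  refine ⟨e, f, hdee, hdff, hdef, fun i => ?_, fun j hc => ?_⟩
  · show w i - dot w e * e i - dot w f * f i = 0
    rw [hdwe, hdwf, ← hwe i]
    ring
  · -- pye e f (v j) = 0 leads to a contradiction
    have hvj : ∀ i, v j i = dot (v j) e * e i + dot (v j) f * f i := by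
      intro i
      have := hc i
      show v j i = _
      have h0 : v j i - dot (v j) e * e i - dot (v j) f * f i = 0 := this
      linarith
    by_cases hdvf : dot (v j) f = 0
    · apply hv j
      refine ⟨dot (v j) e * sw⁻¹, fun i => ?_⟩
      rw [hvj i, hdvf, he]
      ring
    · apply hu2 j
      have key : ∀ i, dot (v j) f * su⁻¹ * u i
          = v j i - (dot (v j) e * sw⁻¹ - dot (v j) f * su⁻¹ * dot u e * sw⁻¹) * w i := by
        intro i
        have h1 := hvj i
        have hfi : f i = su⁻¹ * (u i - dot u e * e i) := rfl
        have hei : e i = sw⁻¹ * w i := rfl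
        linear_combination (-1:ℝ) * h1 - dot (v j) f * hfi
          - (dot (v j) e - dot (v j) f * su⁻¹ * dot u e) * hei
      refine ⟨-(su / dot (v j) f) * (dot (v j) e * sw⁻¹ - dot (v j) f * su⁻¹ * dot u e * sw⁻¹),
        su / dot (v j) f, fun i => ?_⟩
      have hui : u i = (su / dot (v j) f) * (dot (v j) f * su⁻¹ * u i) := by
        field_simp
      rw [hui, key i]
      ring

/-! ### Escaping lines through finitely many points -/

lemma Qf_congr {n : ℕ} {x x' : Fin (n+1) → ℝ} (h : ∀ i, x i = x' i) : Qf x = Qf x' := by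
  unfold Qf
  rw [dot_congr_left h, dot_comm, dot_congr_left h, dot_comm]

lemma Q_add_smul {n : ℕ} (x y : Fin (n+1) → ℝ) (t : ℝ) :
    Qf (fun i => x i + t * y i) = Qf x + 2*t*(dot x y) + t^2 * Qf y := by
  unfold Qf dot
  have h : ∀ i ∈ Finset.univ, (x i + t*y i)*(x i + t*y i)
      = x i * x i + (2*t)*(x i * y i) + t^2*(y i * y i) := by
    intros; ring
  rw [Finset.sum_congr rfl h, Finset.sum_add_distrib, Finset.sum_add_distrib,
    ← Finset.mul_sum, ← Finset.mul_sum]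

/-- the second intersection point of the line through `p` and `r` with the sphere -/
noncomputable def badPt {n : ℕ} (p r : E n) : E n :=
  WithLp.toLp 2 (fun i => p i + (-2 * dot (fun l => p l) (fun l => r l - p l)
    / Qf (fun l => r l - p l)) * (r i - p i))

lemma line_escape {n : ℕ} (p r c : E n) (hp : p ∈ unitSphere n) (hc : c ∈ unitSphere n)
    (hrp : r ≠ p) (hcp : c ≠ p) (hbad : c ≠ badPt p r) :
    ¬ ∃ lam : ℝ, ∀ i, r i = p i + lam * (c i - p i) := by
  rintro ⟨lam, hlam⟩
  have hd : (fun l => r l - p l) ≠ 0 := by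
    intro h0
    apply hrp
    refine PiLp.ext (fun i => ?_)
    have := congrFun h0 i
    simp only [Pi.zero_apply] at this
    linarith [this]
  have hQd := Qf_pos _ hd
  have hlam0 : lam ≠ 0 := by
    intro h0
    apply hrp
    refine PiLp.ext (fun i => ?_)
    have := hlam i
    rw [h0] at this
    rw [this]; ring
  have hci : ∀ i, c i = p i + lam⁻¹ * (r i - p i) := by
    intro i
    have h1 : lam * (c i - p i) = r i - p i := by linarith [hlam i]
    have h2 : c i = p i + lam⁻¹ * (lam * (c i - p i)) := by
      field_simp
      ring
    rw [h2, h1]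
  have hQc : Qf (fun i => c i) = 1 := (sphere_iff_Q c).mp hc
  have hQp : Qf (fun i => p i) = 1 := (sphere_iff_Q p).mp hp
  have hQc2 : Qf (fun i => p i + lam⁻¹ * (r i - p i)) = 1 := by
    rw [← Qf_congr (fun i => hci i)]
    exact hQc
  rw [Q_add_smul, hQp] at hQc2
  have hkey : lam⁻¹ * (2 * dot (fun l => p l) (fun l => r l - p l)
      + lam⁻¹ * Qf (fun l => r l - p l)) = 0 := by
    have : (2:ℝ)*lam⁻¹*(dot (fun l => p l) (fun l => r l - p l))
        + (lam⁻¹)^2 * Qf (fun l => r l - p l) = 0 := by linarith [hQc2]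
    linear_combination this
  have hinv : lam⁻¹ ≠ 0 := inv_ne_zero hlam0
  have hsol : lam⁻¹ = -2 * dot (fun l => p l) (fun l => r l - p l)
      / Qf (fun l => r l - p l) := by
    rcases mul_eq_zero.mp hkey with h' | h'
    · exact absurd h' hinv
    · rw [eq_div_iff hQd.ne']
      linarith [h']
  apply hbad
  refine PiLp.ext (fun i => ?_)
  rw [hci i, hsol]
  rfl

/-! ### The sphere is infinite -/

lemma sphere_infinite {n : ℕ} (hn : 2 ≤ n) : (unitSphere n).Infinite := by
  have h01 : (1:ℕ) < n + 1 := by omega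
  have h0 : (0:ℕ) < n + 1 := by omega
  set i0 : Fin (n+1) := ⟨0, h0⟩
  set i1 : Fin (n+1) := ⟨1, h01⟩
  have hne : i0 ≠ i1 := by
    intro h
    have := congrArg Fin.val h
    simp [i0, i1] at this
  have hee : dot (std i0) (std i0) = 1 := by rw [dot_std, if_pos rfl]
  have hff : dot (std i1) (std i1) = 1 := by rw [dot_std, if_pos rfl]
  have hef : dot (std i0) (std i1) = 0 := by rw [dot_std, if_neg hne]
  set emb : ℝ → E n := fun s => WithLp.toLp 2 (fun i => rotc s * std i0 i + rots s * std i1 i) with hemb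
  have dot_zero_left : ∀ y : Fin (n+1) → ℝ, dot (fun _ => (0:ℝ)) y = 0 := by
    intro y
    unfold dot
    apply Finset.sum_eq_zero
    intros; ring
  have hdot : ∀ s (y : Fin (n+1) → ℝ), dot (fun i => emb s i) y
      = rotc s * dot (std i0) y + rots s * dot (std i1) y := by
    intro s y
    have h1 : ∀ i, emb s i = (fun _ => (0:ℝ)) i + rotc s * std i0 i + rots s * std i1 i := by
      intro i; simp [hemb]
    rw [dot_congr_left h1, dot_addmul, dot_zero_left]
    ring
  have hmem : ∀ s, emb s ∈ unitSphere n := by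
    intro s
    rw [sphere_iff_Q]
    show dot (fun i => emb s i) (fun i => emb s i) = 1
    rw [hdot s, dot_comm (std i0) _, dot_comm (std i1) _, hdot s, hdot s, hee, hff,
      dot_comm (std i1) (std i0), hef]
    have := rotcs_sq s
    nlinarith [this]
  have hinj : Function.Injective emb := by
    intro s s' hss
    have hc : rotc s = rotc s' := by
      have h1 : dot (fun i => emb s i) (std i0) = dot (fun i => emb s' i) (std i0) := by
        rw [hss]
      rw [hdot, hdot, hee, dot_comm (std i1) (std i0), hef] at h1
      linarith [h1]
    have hs : rots s = rots s' := by
      have h1 : dot (fun i => emb s i) (std i1) = dot (fun i => emb s' i) (std i1) := by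
        rw [hss]
      rw [hdot, hdot, hff, hef] at h1
      linarith [h1]
    have hden : ∀ t : ℝ, 1 + rotc t = 2/(1+t^2) := by
      intro t
      unfold rotc
      field_simp
      norm_num
    have hrec : ∀ t : ℝ, rots t / (1 + rotc t) = t := by
      intro t
      rw [hden t]
      unfold rots
      rw [div_div_div_eq]
      have h2 : (1:ℝ) + t^2 ≠ 0 := one_add_sq_ne t
      field_simp
    calc s = rots s / (1 + rotc s) := (hrec s).symm
    _ = rots s' / (1 + rotc s') := by rw [hc, hs]
    _ = s' := hrec s'
  exact Set.infinite_of_injective_forall_mem hinj hmem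

/-! ### Moving one point while fixing finitely many others -/

lemma pye_sub {n : ℕ} (e f : Fin (n+1) → ℝ) (x y : Fin (n+1) → ℝ) (k : Fin (n+1)) :
    pye e f (fun i => x i - y i) k = pye e f x k - pye e f y k := by
  unfold pye
  rw [dot_sub_left, dot_sub_left]
  ring

lemma leg {n : ℕ} (hn : 2 ≤ n) {k : ℕ} (R : Fin k → E n) (a c : E n)
    (ha : a ∈ unitSphere n) (hc : c ∈ unitSphere n) (hac : a ≠ c)
    (hnl : ∀ j, ¬ ∃ lam : ℝ, ∀ i, R j i = a i + lam * (c i - a i)) :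
    ∃ φ, Nice n φ ∧ (∀ j, φ (R j) = R j) ∧ φ a = c := by
  have hwne : (fun i => c i - a i) ≠ (0 : Fin (n+1) → ℝ) := by
    intro h0
    apply hac
    refine PiLp.ext (fun i => ?_)
    have := congrFun h0 i
    simp only [Pi.zero_apply] at this
    linarith
  have hvcond : ∀ j, ¬ ∃ μ : ℝ, ∀ i, (fun l => R j l - a l) i = μ * (fun l => c l - a l) i := by
    rintro j ⟨μ, hμ⟩
    apply hnl j
    refine ⟨μ, fun i => ?_⟩
    have := hμ i
    simp only at this
    linarith
  obtain ⟨e, f, hee, hff, hef, hpw, hpv⟩ :=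
    exists_plane hn (fun i => c i - a i) hwne (fun j => fun l => R j l - a l) hvcond
  apply circle_move hee hff hef R a c ha hc
  · funext i
    have h1 := hpw i
    have h2 := pye_sub e f (fun l => c l) (fun l => a l) i
    have h3 : pye e f (fun l => c l - a l) i = pye e f (fun l => c l) i
        - pye e f (fun l => a l) i := h2
    rw [h3] at h1
    linarith
  · intro j hj
    apply hpv j
    intro i
    have h2 := pye_sub e f (fun l => R j l) (fun l => a l) i
    have h3 := congrFun hj i
    rw [h2, h3]
    ring

lemma move_one {n : ℕ} (hn : 2 ≤ n) {k : ℕ} (R : Fin k → E n) (a b : E n)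
    (ha : a ∈ unitSphere n) (hb : b ∈ unitSphere n)
    (haR : ∀ j, R j ≠ a) (hbR : ∀ j, R j ≠ b) :
    ∃ φ, Nice n φ ∧ (∀ j, φ (R j) = R j) ∧ φ a = b := by
  classical
  by_cases hab : a = b
  · exact ⟨fun x => x, Nice.id, fun _ => rfl, by rw [hab]⟩
  have hBadFin : (({a, b} : Set (E n)) ∪ (Set.range fun j => badPt a (R j))
      ∪ (Set.range fun j => badPt b (R j))).Finite := by
    apply Set.Finite.union
    apply Set.Finite.union
    · exact (Set.finite_singleton b).insert a
    · exact Set.finite_range _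
    · exact Set.finite_range _
  obtain ⟨c, hcS, hcB⟩ := ((sphere_infinite hn).diff hBadFin).nonempty
  simp only [Set.mem_union, Set.mem_insert_iff, Set.mem_singleton_iff, Set.mem_range,
    not_or, not_exists] at hcB
  obtain ⟨⟨⟨hca, hcb⟩, hbad1⟩, hbad2⟩ := hcB
  obtain ⟨φ₁, hφ₁, hfix₁, hmove₁⟩ := leg hn R a c ha hcS (fun h => hca h.symm)
    (fun j => line_escape a (R j) c ha hcS (haR j) hca (fun h => hbad1 j h.symm))
  have hnl2 : ∀ j, ¬ ∃ lam : ℝ, ∀ i, R j i = c i + lam * (b i - c i) := by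
    rintro j ⟨lam, hlam⟩
    apply line_escape b (R j) c hb hcS (hbR j) hcb (fun h => hbad2 j h.symm)
    refine ⟨1 - lam, fun i => ?_⟩
    linear_combination hlam i
  obtain ⟨φ₂, hφ₂, hfix₂, hmove₂⟩ := leg hn R c b hcS hb hcb hnl2
  refine ⟨fun x => φ₂ (φ₁ x), hφ₂.comp hφ₁, fun j => ?_, ?_⟩
  · show φ₂ (φ₁ (R j)) = R j
    rw [hfix₁ j, hfix₂ j]
  · show φ₂ (φ₁ a) = b
    rw [hmove₁, hmove₂]

/-! ### Moving many points -/

lemma move_many {n : ℕ} (hn : 2 ≤ n) (m : ℕ) (P Q : Fin m → E n)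
    (hP : ∀ j, P j ∈ unitSphere n) (hQ : ∀ j, Q j ∈ unitSphere n)
    (hPinj : Function.Injective P) (hQinj : Function.Injective Q) :
    ∀ K : ℕ, K ≤ m → ∃ φ, Nice n φ ∧ ∀ j : Fin m, (j : ℕ) < K → φ (P j) = Q j := by
  intro K
  induction K with
  | zero => exact fun _ => ⟨fun x => x, Nice.id, fun j h => absurd h (by omega)⟩
  | succ k ih =>
    intro hk
    obtain ⟨φ₀, hφ₀, hfix⟩ := ih (by omega)
    have hkm : k < m := by omega
    set jk : Fin m := ⟨k, hkm⟩ with hjk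
    set R : Fin k → E n := fun i => Q ⟨(i : ℕ), by omega⟩ with hR
    have haS : φ₀ (P jk) ∈ unitSphere n := hφ₀.mapsTo _ (hP jk)
    have haR : ∀ i : Fin k, R i ≠ φ₀ (P jk) := by
      intro i hc
      have h1 : (⟨(i : ℕ), by omega⟩ : Fin m) ≠ jk := by
        intro h
        have := congrArg Fin.val h
        simp only [hjk] at this
        omega
      have h2 : φ₀ (P ⟨(i : ℕ), by omega⟩) = Q ⟨(i : ℕ), by omega⟩ :=
        hfix _ i.isLt
      have h3 : φ₀ (P ⟨(i : ℕ), by omega⟩) = φ₀ (P jk) := by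
        rw [h2]; exact hc
      have h4 := hPinj (hφ₀.injOn h3)
      exact h1 h4
    have hbR : ∀ i : Fin k, R i ≠ Q jk := by
      intro i hc
      have h4 := hQinj hc
      have := congrArg Fin.val h4
      simp only [hjk] at this
      omega
    obtain ⟨ψ, hψ, hψfix, hψmove⟩ := move_one hn R (φ₀ (P jk)) (Q jk) haS (hQ jk) haR hbR
    refine ⟨fun x => ψ (φ₀ x), hψ.comp hφ₀, fun j hj => ?_⟩
    show ψ (φ₀ (P j)) = Q j
    by_cases hjlt : (j : ℕ) < k
    · rw [hfix j hjlt]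
      have h5 : Q j = R ⟨(j : ℕ), hjlt⟩ := rfl
      rw [h5, hψfix]
    · have hjeq : j = jk := by
        apply Fin.ext
        simp only [hjk]
        omega
      rw [hjeq, hψmove]

end Stmt5

end

/-- for `n ≥ 2`, the group of birational diffeomorphisms of `Sⁿ` acts
infinitely transitively: any `m`-tuple of pairwise distinct points of `Sⁿ` is mapped to
any other such `m`-tuple by a birational diffeomorphism of `Sⁿ`. -/
theorem stmt5 (n : ℕ) (hn : 2 ≤ n) (m : ℕ) (hm : 0 < m)
    (P Q : Fin m → EuclideanSpace ℝ (Fin (n + 1)))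
    (hP : ∀ j, P j ∈ unitSphere n) (hQ : ∀ j, Q j ∈ unitSphere n)
    (hPinj : Function.Injective P) (hQinj : Function.Injective Q) :
    ∃ φ, IsBirationalDiffeo n φ ∧ ∀ j, φ (P j) = Q j := by
  obtain ⟨φ, hφ, hmap⟩ := Stmt5.move_many hn m P Q hP hQ hPinj hQinj m le_rfl
  exact ⟨φ, hφ.isBirationalDiffeo, fun j => hmap j j.isLt⟩
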